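/- Let G be a transitive subgroup of the symmetric group on a finite set Ω, and let G_d be the stabilizer in G of a point d ∈ Ω. Then the centralizer of G in S_Ω is isomorphic to the quotient N_G(G_d)/G_d of the normalizer of G_d in G by G_d. -/

import Mathlib

/-- Lemma A1: if `G` is a transitive subgroup of the symmetric group of a finite set `Ω`
and `G_d` is the stabilizer in `G` of a point `d`, then the centralizer of `G` in `S_Ω`
is isomorphic to `N_G(G_d) / G_d`. -/
theorem stmt_2 {Ω : Type} [Fintype Ω] (G : Subgroup (Equiv.Perm Ω))
    (htrans : ∀ a b : Ω, ∃ g ∈ G, g a = b) (d : Ω) :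
    Nonempty ((Subgroup.centralizer (G : Set (Equiv.Perm Ω))) ≃*
      ((Subgroup.normalizer (((MulAction.stabilizer (Equiv.Perm Ω) d).subgroupOf G : Set G))) ⧸
        ((MulAction.stabilizer (Equiv.Perm Ω) d).subgroupOf G).subgroupOf
          (Subgroup.normalizer (((MulAction.stabilizer (Equiv.Perm Ω) d).subgroupOf G : Set G))))) := by
  classical
  set H := (MulAction.stabilizer (Equiv.Perm Ω) d).subgroupOf G with hHdef
  choose r hrG hrd using fun x => htrans d x
  set rg : Ω → G := fun x => ⟨r x, hrG x⟩ with hrgdef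
  have hrgd : ∀ x, (rg x : Equiv.Perm Ω) d = x := hrd
  have memH : ∀ a : G, a ∈ H ↔ (a : Equiv.Perm Ω) d = d := by
    intro a
    simp [hHdef, Subgroup.mem_subgroupOf, MulAction.mem_stabilizer_iff,
      Equiv.Perm.smul_def]
  -- well-definedness of the map
  have wd : ∀ n : G, n ∈ (Subgroup.normalizer (H : Set G)) → ∀ a b : G,
      (a : Equiv.Perm Ω) d = (b : Equiv.Perm Ω) d →
      (a : Equiv.Perm Ω) (((n⁻¹ : G) : Equiv.Perm Ω) d)
        = (b : Equiv.Perm Ω) (((n⁻¹ : G) : Equiv.Perm Ω) d) := by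
    intro n hn a b hab
    have hk : b⁻¹ * a ∈ H := by
      rw [memH]
      simp [Equiv.Perm.mul_apply, hab]
    have hk2 := (Subgroup.mem_normalizer_iff.mp hn _).mp hk
    rw [memH] at hk2
    simp only [Subgroup.coe_mul, Subgroup.coe_inv, Equiv.Perm.mul_apply] at hk2 ⊢
    have := congrArg
      (fun y => (b : Equiv.Perm Ω) (((n : Equiv.Perm Ω))⁻¹ y)) hk2
    simpa using this
  -- the underlying function
  set F : (Subgroup.normalizer (H : Set G)) → Ω → Ω :=
    fun ν x => (r x) ((((ν : G)⁻¹ : G) : Equiv.Perm Ω) d) with hFdef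
  have hFval : ∀ (ν : (Subgroup.normalizer (H : Set G))) x,
      F ν x = ((rg x * (ν : G)⁻¹ : G) : Equiv.Perm Ω) d := by
    intro ν x
    simp [hFdef, hrgdef, Equiv.Perm.mul_apply]
  have hF2 : ∀ (ν μ : (Subgroup.normalizer (H : Set G))) x,
      F ν (F μ x) = (r x) (((((ν : G) * (μ : G))⁻¹ : G) : Equiv.Perm Ω) d) := by
    intro ν μ x
    have hb : ((rg (F μ x) : G) : Equiv.Perm Ω) d
        = ((rg x * (μ : G)⁻¹ : G) : Equiv.Perm Ω) d := by
      rw [hrgd, hFval]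
    have := wd (ν : G) ν.2 (rg (F μ x)) (rg x * (μ : G)⁻¹) hb
    rw [hFdef]
    simp only at this ⊢
    rw [show (r (F μ x)) = ((rg (F μ x) : G) : Equiv.Perm Ω) from rfl, this]
    simp [hrgdef, mul_inv_rev, Equiv.Perm.mul_apply]
  have equivar : ∀ (ν : (Subgroup.normalizer (H : Set G))) (p : G) (x : Ω),
      F ν ((p : Equiv.Perm Ω) x) = (p : Equiv.Perm Ω) (F ν x) := by
    intro ν p x
    have hb : ((rg ((p : Equiv.Perm Ω) x) : G) : Equiv.Perm Ω) d
        = ((p * rg x : G) : Equiv.Perm Ω) d := by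
      rw [hrgd]
      simp [hrgdef, Equiv.Perm.mul_apply, hrd]
    have := wd (ν : G) ν.2 (rg ((p : Equiv.Perm Ω) x)) (p * rg x) hb
    rw [hFdef]
    simp only at this ⊢
    rw [show (r ((p : Equiv.Perm Ω) x))
        = ((rg ((p : Equiv.Perm Ω) x) : G) : Equiv.Perm Ω) from rfl, this]
    simp [hrgdef, Equiv.Perm.mul_apply]
  have hFone : ∀ x, F 1 x = x := by
    intro x
    rw [hFdef]
    simp [hrd]
  -- package each F ν as a permutation
  set σ : (Subgroup.normalizer (H : Set G)) → Equiv.Perm Ω := fun ν =>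
    { toFun := F ν
      invFun := F ν⁻¹
      left_inv := by
        intro x
        rw [hF2 ν⁻¹ ν x]
        simp [hrd]
      right_inv := by
        intro x
        rw [hF2 ν ν⁻¹ x]
        simp [hrd] } with hσdef
  have hσapp : ∀ (ν : (Subgroup.normalizer (H : Set G))) x, σ ν x = F ν x := fun ν x => rfl
  have hσcent : ∀ ν, σ ν ∈ Subgroup.centralizer (G : Set (Equiv.Perm Ω)) := by
    intro ν
    rw [Subgroup.mem_centralizer_iff]
    intro p hp
    ext x
    simp only [Equiv.Perm.mul_apply, hσapp]
    exact (equivar ν ⟨p, hp⟩ x).symm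
  set φ : (Subgroup.normalizer (H : Set G)) →* (Subgroup.centralizer (G : Set (Equiv.Perm Ω))) :=
    { toFun := fun ν => ⟨σ ν, hσcent ν⟩
      map_one' := by
        apply Subtype.ext
        apply Equiv.ext
        intro x
        exact hFone x
      map_mul' := by
        intro ν μ
        apply Subtype.ext
        apply Equiv.ext
        intro x
        have h1 : σ (ν * μ) x = F (ν * μ) x := rfl
        have h2 : ((σ ν) * (σ μ) : Equiv.Perm Ω) x = F ν (F μ x) := rfl
        rw [Subgroup.coe_mul]
        rw [h1, h2, hF2, hFdef]
        simp } with hφdef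
  have hφapp : ∀ (ν : (Subgroup.normalizer (H : Set G))) (x : Ω), ((φ ν : Equiv.Perm Ω)) x = F ν x :=
    fun ν x => rfl
  -- kernel
  have hker : φ.ker = H.subgroupOf (Subgroup.normalizer (H : Set G)) := by
    ext ν
    rw [MonoidHom.mem_ker, Subgroup.mem_subgroupOf, memH]
    constructor
    · intro h
      have hd : F ν d = d := by
        rw [← hφapp, h]; rfl
      rw [hFdef] at hd
      simp only at hd
      have hinv : (((ν : G)⁻¹ : G) : Equiv.Perm Ω) d = d := by
        have hrdd := hrd d
        exact (r d).injective (by rw [hd, hrdd])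
      have := congrArg (fun y => ((ν : G) : Equiv.Perm Ω) y) hinv
      simpa using this.symm
    · intro h
      apply Subtype.ext
      apply Equiv.ext
      intro x
      have hinv : (((ν : G)⁻¹ : G) : Equiv.Perm Ω) d = d := by
        have := congrArg (fun y => (((ν : G)⁻¹ : G) : Equiv.Perm Ω) y) h
        simpa using this.symm
      show F ν x = x
      rw [hFdef]
      simp only
      rw [hinv, hrd]
  -- surjectivity
  have hsurj : Function.Surjective φ := by
    rintro ⟨τ, hτ⟩
    have hcomm : ∀ p ∈ G, p * τ = τ * p := Subgroup.mem_centralizer_iff.mp hτ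
    have hcommx : ∀ (p : G) (x : Ω),
        (p : Equiv.Perm Ω) (τ x) = τ ((p : Equiv.Perm Ω) x) := by
      intro p x
      have := congrArg (fun σ => (σ : Equiv.Perm Ω) x) (hcomm p p.2)
      simpa [Equiv.Perm.mul_apply] using this
    set b : G := rg (τ d) with hbdef
    have hbd : (b : Equiv.Perm Ω) d = τ d := hrgd (τ d)
    have hn : b⁻¹ ∈ (Subgroup.normalizer (H : Set G)) := by
      rw [Subgroup.mem_normalizer_iff]
      intro h
      rw [memH, memH]
      have e1 : ((b⁻¹ * h * b⁻¹⁻¹ : G) : Equiv.Perm Ω) d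
          = ((b : Equiv.Perm Ω))⁻¹
            ((h : Equiv.Perm Ω) ((b : Equiv.Perm Ω) d)) := by
        simp [mul_assoc, Equiv.Perm.mul_apply]
      rw [e1]
      constructor
      · intro hh
        rw [hbd, hcommx h d, hh, ← hbd]
        exact Equiv.symm_apply_apply _ _
      · intro hh
        rw [hbd, hcommx h d] at hh
        have h2 := congrArg (fun y => (b : Equiv.Perm Ω) y) hh
        simp only [Equiv.Perm.inv_def, Equiv.apply_symm_apply] at h2
        rw [hbd] at h2
        exact τ.injective h2
    refine ⟨⟨b⁻¹, hn⟩, ?_⟩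
    apply Subtype.ext
    apply Equiv.ext
    intro x
    rw [hφapp, hFdef]
    simp only [inv_inv]
    rw [show ((b : G) : Equiv.Perm Ω) d = τ d from hbd]
    rw [show (r x) (τ d) = ((rg x : G) : Equiv.Perm Ω) (τ d) from rfl]
    rw [hcommx, hrgd]
  exact ⟨((QuotientGroup.quotientMulEquivOfEq hker.symm).trans
    (QuotientGroup.quotientKerEquivOfSurjective φ hsurj)).symm⟩
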